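/- Assume v_1 ≥ v_2 ≥ … ≥ v_n and ∑_{i=1}^n v_i ≥ 1. Let k be the minimal integer with ∑_{i=1}^k v_i ≥ 1 and set U = {1,…,k}. Let (L̂_1,…,L̂_k) be a multinomial random vector with T trials and probability vector (p_1,…,p_k) where p_i = v_i/v(U), and let M̂ = max_{1≤i≤k} L̂_i. Then OPT^DP(U) ≤ E(M̂). -/

import Mathlib

open Finset

/-- MNL choice probability of product `i` when assortment `S` is offered. -/
noncomputable def phi {n : ℕ} (v : Fin n → ℝ) (S : Finset (Fin n)) (i : Fin n) : ℝ :=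
  v i / (1 + ∑ j ∈ S, v j)

/-- MNL no-purchase probability when assortment `S` is offered. -/
noncomputable def phi0 {n : ℕ} (v : Fin n → ℝ) (S : Finset (Fin n)) : ℝ :=
  1 / (1 + ∑ j ∈ S, v j)

/-- The dynamic-programming value functions `M_t(ℓ)` of the adaptive maximum load
problem over the universe `U`: `M_0(ℓ) = max_i ℓ_i` and
`M_t(ℓ) = max_{S ⊆ U} (φ_0(S)·M_{t-1}(ℓ) + ∑_{i∈S} φ_i(S)·M_{t-1}(ℓ + e_i))`. -/
noncomputable def dpVal {n : ℕ} (v : Fin n → ℝ) (U : Finset (Fin n)) :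
    ℕ → (Fin n → ℕ) → ℝ
  | 0, ℓ => ((Finset.univ.sup ℓ : ℕ) : ℝ)
  | t + 1, ℓ =>
      U.powerset.sup' ⟨∅, Finset.empty_mem_powerset U⟩ fun S =>
        phi0 v S * dpVal v U t ℓ +
          ∑ i ∈ S, phi v S i * dpVal v U t (Function.update ℓ i (ℓ i + 1))

/-- `OPT^DP(U) = M_T(0)`: the optimal expected maximum load achievable by an adaptive
policy offering assortments from the universe `U` to `T` sequentially arriving customers
making independent MNL choices. -/
noncomputable def dpOpt {n : ℕ} (v : Fin n → ℝ) (U : Finset (Fin n)) (T : ℕ) : ℝ :=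
  dpVal v U T fun _ => 0

/-- `E(max_{1 ≤ i ≤ k} L_i)` where `(L_1, …, L_k)` is a multinomial random vector with `T`
trials and probability vector `p`: each of `T` independent trials results in outcome
`i : Fin k` with probability `p i`, and `L_i` counts the trials with outcome `i`. -/
noncomputable def multiExpMax (T k : ℕ) (p : Fin k → ℝ) : ℝ :=
  ∑ f : Fin T → Fin k,
    (∏ t, p (f t)) *
      ((Finset.univ.sup fun i => (Finset.univ.filter fun t => f t = i).card : ℕ) : ℝ)

/-- Expected max of `ℓ + multinomial counts` pushed into `Fin n` via `g`. -/
noncomputable def Eexp (n k : ℕ) (p : Fin k → ℝ) (g : Fin k → Fin n)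
    (T : ℕ) (ℓ : Fin n → ℕ) : ℝ :=
  ∑ f : Fin T → Fin k,
    (∏ t, p (f t)) *
      ((Finset.univ.sup fun j : Fin n =>
        ℓ j + (Finset.univ.filter fun t => g (f t) = j).card : ℕ) : ℝ)

lemma Eexp_zero (n k : ℕ) (p : Fin k → ℝ) (g : Fin k → Fin n) (ℓ : Fin n → ℕ) :
    Eexp n k p g 0 ℓ = ((Finset.univ.sup ℓ : ℕ) : ℝ) := by
  simp [Eexp]

lemma card_filter_fin_succ (T : ℕ) (P : Fin (T + 1) → Prop) [DecidablePred P] :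
    (Finset.univ.filter P).card =
      (if P 0 then 1 else 0) + (Finset.univ.filter fun t : Fin T => P t.succ).card := by
  simp only [Finset.card_filter]
  rw [Fin.sum_univ_succ]

lemma sup_update (n : ℕ) (ℓ : Fin n → ℕ) (a : Fin n) (c : Fin n → ℕ) :
    (Finset.univ.sup fun j => Function.update ℓ a (ℓ a + 1) j + c j) =
      Finset.univ.sup fun j => ℓ j + ((if a = j then 1 else 0) + c j) := by
  congr 1; funext j
  rcases eq_or_ne j a with h | h
  · subst h; simp [Function.update_self]; omega
  · simp [Function.update_of_ne h, (Ne.symm h)]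

lemma Eexp_succ (n k : ℕ) (p : Fin k → ℝ) (g : Fin k → Fin n) (T : ℕ) (ℓ : Fin n → ℕ) :
    Eexp n k p g (T + 1) ℓ =
      ∑ i : Fin k, p i * Eexp n k p g T (Function.update ℓ (g i) (ℓ (g i) + 1)) := by
  unfold Eexp
  rw [← Equiv.sum_comp (Fin.consEquiv fun _ : Fin (T + 1) => Fin k), Fintype.sum_prod_type]
  refine Finset.sum_congr rfl fun i _ => ?_
  rw [Finset.mul_sum]
  refine Finset.sum_congr rfl fun f _ => ?_
  have h0 : (Fin.consEquiv fun _ : Fin (T + 1) => Fin k) (i, f) 0 = i := rfl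
  have hs : ∀ t : Fin T, (Fin.consEquiv fun _ : Fin (T + 1) => Fin k) (i, f) t.succ = f t := fun t => rfl
  have hcount : (Finset.univ.sup fun j : Fin n =>
        ℓ j + (Finset.univ.filter fun t => g ((Fin.consEquiv fun _ : Fin (T + 1) => Fin k) (i, f) t) = j).card)
      = Finset.univ.sup fun j : Fin n =>
        Function.update ℓ (g i) (ℓ (g i) + 1) j
          + (Finset.univ.filter fun t : Fin T => g (f t) = j).card := by
    rw [sup_update]
    congr 1; funext j
    rw [card_filter_fin_succ T (fun t => g ((Fin.consEquiv fun _ : Fin (T + 1) => Fin k) (i, f) t) = j)]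
    simp only [h0, hs]
  rw [Fin.prod_univ_succ]
  simp only [h0, hs]
  rw [hcount, mul_assoc]

lemma Eexp_mono (n k : ℕ) (p : Fin k → ℝ) (hp : ∀ i, 0 ≤ p i) (g : Fin k → Fin n)
    (T : ℕ) (ℓ ℓ' : Fin n → ℕ) (h : ∀ j, ℓ j ≤ ℓ' j) :
    Eexp n k p g T ℓ ≤ Eexp n k p g T ℓ' := by
  refine Finset.sum_le_sum fun f _ => ?_
  refine mul_le_mul_of_nonneg_left ?_ (Finset.prod_nonneg fun t _ => hp _)
  exact Nat.cast_le.2 (Finset.sup_mono_fun fun j _ => Nat.add_le_add_right (h j) _)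

lemma sup_count_comp (n k T : ℕ) (g : Fin k → Fin n) (hg : Function.Injective g)
    (f : Fin T → Fin k) :
    (Finset.univ.sup fun j : Fin n => (Finset.univ.filter fun t => g (f t) = j).card) =
      Finset.univ.sup fun i : Fin k => (Finset.univ.filter fun t => f t = i).card := by
  apply le_antisymm
  · refine Finset.sup_le fun j _ => ?_
    by_cases hj : ∃ i, g i = j
    · obtain ⟨i, rfl⟩ := hj
      have h1 : (Finset.univ.filter fun t => g (f t) = g i)
          = Finset.univ.filter fun t => f t = i := by
        apply Finset.filter_congr; intro t _; simp [hg.eq_iff]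
      rw [h1]
      exact Finset.le_sup (f := fun i : Fin k => (Finset.univ.filter fun t => f t = i).card)
        (Finset.mem_univ i)
    · have h1 : (Finset.univ.filter fun t => g (f t) = j) = ∅ := by
        apply Finset.filter_eq_empty_iff.mpr
        intro t _ h; exact hj ⟨f t, h⟩
      simp [h1]
  · refine Finset.sup_le fun i _ => ?_
    have h1 : (Finset.univ.filter fun t : Fin T => f t = i)
        = Finset.univ.filter fun t => g (f t) = g i := by
      apply Finset.filter_congr; intro t _; simp [hg.eq_iff]
    rw [h1]
    exact Finset.le_sup (f := fun j : Fin n => (Finset.univ.filter fun t => g (f t) = j).card)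
      (Finset.mem_univ (g i))

/-- Let `k` be minimal with `v_1 + ⋯ + v_k ≥ 1` (products sorted by weakly decreasing
weight, total weight at least 1) and `U = {1,…,k}`. Then the optimal dynamic value over
`U` is at most the expected maximum component `E(M̂)` of a multinomial vector with `T`
trials and probabilities `p_i = v_i / v(U)`. -/
theorem dp_on_prefix_dominated_by_multinomial
    (n T k : ℕ) (v : Fin n → ℝ) (hv : ∀ i, 0 < v i)
    (hsorted : ∀ i j : Fin n, i ≤ j → v j ≤ v i)
    (htotal : 1 ≤ ∑ i, v i)
    (hk1 : 1 ≤ k) (hkn : k ≤ n)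
    (hk : 1 ≤ ∑ i ∈ Finset.univ.filter (fun i : Fin n => (i : ℕ) < k), v i)
    (hmin : ∀ k' : ℕ, k' < k →
      ∑ i ∈ Finset.univ.filter (fun i : Fin n => (i : ℕ) < k'), v i < 1) :
    dpOpt v (Finset.univ.filter fun i : Fin n => (i : ℕ) < k) T ≤
      multiExpMax T k (fun i : Fin k =>
        v ⟨(i : ℕ), lt_of_lt_of_le i.isLt hkn⟩ /
          ∑ j ∈ Finset.univ.filter (fun j : Fin n => (j : ℕ) < k), v j) := by
  classical
  set U : Finset (Fin n) := Finset.univ.filter (fun i : Fin n => (i : ℕ) < k) with hU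
  set V : ℝ := ∑ j ∈ U, v j with hVdef
  have hV1 : (1 : ℝ) ≤ V := hk
  have hV0 : (0 : ℝ) < V := lt_of_lt_of_le one_pos hV1
  set emb : Fin k → Fin n := fun i => ⟨(i : ℕ), lt_of_lt_of_le i.isLt hkn⟩ with hemb
  have hinj : Function.Injective emb := by
    intro a b h
    rw [hemb] at h
    simp only [Fin.mk.injEq] at h
    exact Fin.ext h
  set p : Fin k → ℝ := fun i : Fin k => v (emb i) / V with hp
  have hpnn : ∀ i, 0 ≤ p i := fun i => div_nonneg (hv _).le hV0.le
  have hUmap : U = Finset.univ.map ⟨emb, hinj⟩ := by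
    ext j
    simp only [hU, Finset.mem_filter, Finset.mem_univ, true_and, Finset.mem_map,
      Function.Embedding.coeFn_mk]
    constructor
    · intro hj; exact ⟨⟨(j : ℕ), hj⟩, Fin.ext rfl⟩
    · rintro ⟨i, rfl⟩; exact i.isLt
  have hkey : ∀ S : Finset (Fin n), S ⊆ U → ∀ i ∈ S, V ≤ 1 + ∑ j ∈ S, v j := by
    intro S hSU i hiS
    have hik : (i : ℕ) < k := by
      have h := hSU hiS; rw [hU] at h
      exact (Finset.mem_filter.mp h).2
    have hmlt : k - 1 < n := by omega
    set m : Fin n := ⟨k - 1, hmlt⟩ with hm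
    have hsplit : U = insert m (Finset.univ.filter fun x : Fin n => (x : ℕ) < k - 1) := by
      ext x
      simp only [hU, Finset.mem_filter, Finset.mem_univ, true_and, Finset.mem_insert, hm,
        Fin.ext_iff]
      omega
    have hmnot : m ∉ (Finset.univ.filter fun x : Fin n => (x : ℕ) < k - 1) := by
      simp [hm]
    have hVeq : V = v m + ∑ x ∈ Finset.univ.filter (fun x : Fin n => (x : ℕ) < k - 1), v x := by
      rw [hVdef, hsplit, Finset.sum_insert hmnot]
    have h1 : ∑ x ∈ Finset.univ.filter (fun x : Fin n => (x : ℕ) < k - 1), v x < 1 :=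
      hmin (k - 1) (by omega)
    have hvm : v m ≤ v i := by
      refine hsorted i m ?_
      simp only [Fin.le_def, hm]
      omega
    have hvS : v i ≤ ∑ j ∈ S, v j := Finset.single_le_sum (fun j _ => (hv j).le) hiS
    linarith
  have hBA : ∀ t (ℓ : Fin n → ℕ) (a : Fin n),
      Eexp n k p emb t ℓ ≤ Eexp n k p emb t (Function.update ℓ a (ℓ a + 1)) := by
    intro t ℓ a
    refine Eexp_mono n k p hpnn emb t _ _ fun j => ?_
    rcases eq_or_ne j a with h | h
    · subst h; simp
    · simp [Function.update_of_ne h]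
  have main : ∀ t (ℓ : Fin n → ℕ), dpVal v U t ℓ ≤ Eexp n k p emb t ℓ := by
    intro t
    induction t with
    | zero => intro ℓ; rw [Eexp_zero]; simp [dpVal]
    | succ t ih =>
      intro ℓ
      rw [Eexp_succ]
      have hsum : ∑ i : Fin k, p i * Eexp n k p emb t (Function.update ℓ (emb i) (ℓ (emb i) + 1))
          = ∑ j ∈ U, (v j / V) * Eexp n k p emb t (Function.update ℓ j (ℓ j + 1)) := by
        rw [hUmap, Finset.sum_map]; rfl
      rw [hsum]
      have hdp : dpVal v U (t + 1) ℓ =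
          U.powerset.sup' ⟨∅, Finset.empty_mem_powerset U⟩ (fun S =>
            phi0 v S * dpVal v U t ℓ +
              ∑ i ∈ S, phi v S i * dpVal v U t (Function.update ℓ i (ℓ i + 1))) := by
        rw [dpVal]
      rw [hdp]
      refine Finset.sup'_le _ _ fun S hS => ?_
      have hSU : S ⊆ U := Finset.mem_powerset.mp hS
      have hD0 : (0 : ℝ) < 1 + ∑ j ∈ S, v j := by
        have h := Finset.sum_nonneg fun j (_ : j ∈ S) => (hv j).le
        linarith
      set A := Eexp n k p emb t ℓ with hA
      set B := fun j : Fin n => Eexp n k p emb t (Function.update ℓ j (ℓ j + 1)) with hBdef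
      have st1 : phi0 v S * dpVal v U t ℓ +
            ∑ i ∈ S, phi v S i * dpVal v U t (Function.update ℓ i (ℓ i + 1)) ≤
          phi0 v S * A + ∑ i ∈ S, phi v S i * B i := by
        refine add_le_add (mul_le_mul_of_nonneg_left (ih ℓ) ?_)
          (Finset.sum_le_sum fun i _ => mul_le_mul_of_nonneg_left (ih _) ?_)
        · exact le_of_lt (by unfold phi0; positivity)
        · unfold phi
          exact div_nonneg (hv i).le hD0.le
      refine st1.trans ?_
      have hw : phi0 v S + ∑ i ∈ S, phi v S i = 1 := by
        unfold phi0 phi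
        rw [← Finset.sum_div, ← add_div, div_self hD0.ne']
      have h3 : ∀ i ∈ S, phi v S i * B i + (v i / V - phi v S i) * A ≤ (v i / V) * B i := by
        intro i hi
        have hwc : phi v S i ≤ v i / V := by
          unfold phi
          rw [div_le_div_iff₀ hD0 hV0]
          exact mul_le_mul_of_nonneg_left (hkey S hSU i hi) (hv i).le
        have hba : A ≤ B i := hBA t ℓ i
        nlinarith [mul_nonneg (sub_nonneg.2 hwc) (sub_nonneg.2 hba)]
      have f1 : (∑ i ∈ S, phi v S i * B i) +
          ((∑ i ∈ S, v i / V) - ∑ i ∈ S, phi v S i) * A ≤ ∑ i ∈ S, (v i / V) * B i := by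
        have h4 := Finset.sum_le_sum h3
        rw [Finset.sum_add_distrib, ← Finset.sum_mul, Finset.sum_sub_distrib] at h4
        exact h4
      have f2 : ∑ j ∈ U \ S, (v j / V) * A ≤ ∑ j ∈ U \ S, (v j / V) * B j :=
        Finset.sum_le_sum fun j _ => mul_le_mul_of_nonneg_left (hBA t ℓ j)
          (div_nonneg (hv j).le hV0.le)
      have hc1 : ∑ j ∈ U, v j / V = 1 := by
        rw [← Finset.sum_div, ← hVdef, div_self hV0.ne']
      have f3 : ∑ j ∈ U \ S, (v j / V) * A = (1 - ∑ i ∈ S, v i / V) * A := by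
        rw [← Finset.sum_mul]
        congr 1
        have h5 : (∑ j ∈ U \ S, v j / V) + ∑ j ∈ S, v j / V = ∑ j ∈ U, v j / V :=
          Finset.sum_sdiff hSU
        linarith
      have f4 : ∑ j ∈ U, (v j / V) * B j =
          ∑ j ∈ S, (v j / V) * B j + ∑ j ∈ U \ S, (v j / V) * B j := by
        rw [add_comm, Finset.sum_sdiff hSU]
      have f5 : phi0 v S = 1 - ∑ i ∈ S, phi v S i := by linarith
      rw [f4, f5]
      nlinarith [f1, f2, f3]
  have hM : Eexp n k p emb T (fun _ => 0) = multiExpMax T k p := by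
    unfold Eexp multiExpMax
    refine Finset.sum_congr rfl fun f _ => ?_
    congr 2
    simp only [zero_add]
    exact sup_count_comp n k T emb hinj f
  rw [← hM]
  exact main T _
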